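/- If symmetric positive definite matrices L and A on ℝⁿ satisfy (Ax,x) ≤ (1/τ)(Lx,x) for all x, then the smoothing operator I − τL⁻¹A is nonnegative with respect to the A-inner product, i.e., (τ L⁻¹ A x, x)_A ≤ (x,x)_A for all x, where (x,y)_A = (Ax,y). -/

import Mathlib

open Matrix
open scoped MatrixOrder

/-- Cauchy-Schwarz in the A-inner product for a positive semidefinite real matrix. -/
lemma csA {n : ℕ} {A : Matrix (Fin n) (Fin n) ℝ} (hA : A.PosSemidef)
    (x y : Fin n → ℝ) :
    (x ⬝ᵥ A *ᵥ y) ^ 2 ≤ (x ⬝ᵥ A *ᵥ x) * (y ⬝ᵥ A *ᵥ y) := by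
  set S := CFC.sqrt A with hS
  have hSerm : Sᵀ = S := by
    have := ((Matrix.nonneg_iff_posSemidef (A := A)).mpr hA |> fun _ => (Matrix.nonneg_iff_posSemidef.mp (CFC.sqrt_nonneg A))).isHermitian
    exact isHermitian_iff_isSymm.mp this
  have key : ∀ u v : Fin n → ℝ, u ⬝ᵥ A *ᵥ v = (S *ᵥ u) ⬝ᵥ (S *ᵥ v) := by
    intro u v
    rw [← CFC.sqrt_mul_sqrt_self A (Matrix.nonneg_iff_posSemidef.mpr hA), ← mulVec_mulVec, dotProduct_mulVec]
    congr 1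
    rw [← mulVec_transpose, hSerm]
  rw [key, key, key]
  have := Finset.sum_mul_sq_le_sq_mul_sq Finset.univ (S *ᵥ x) (S *ᵥ y)
  simpa [dotProduct, pow_two, mul_comm] using this

theorem stmt2 {n : ℕ} (A L : Matrix (Fin n) (Fin n) ℝ) (τ : ℝ) (hτ : 0 < τ)
    (hA : A.PosDef) (hL : L.PosDef)
    (h : ∀ x : Fin n → ℝ, x ⬝ᵥ A *ᵥ x ≤ (1 / τ) * (x ⬝ᵥ L *ᵥ x)) :
    ∀ x : Fin n → ℝ, τ * ((A *ᵥ x) ⬝ᵥ L⁻¹ *ᵥ (A *ᵥ x)) ≤ x ⬝ᵥ A *ᵥ x := by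
  intro x
  set y : Fin n → ℝ := L⁻¹ *ᵥ (A *ᵥ x) with hy
  set c : ℝ := (A *ᵥ x) ⬝ᵥ y with hc
  show τ * c ≤ x ⬝ᵥ A *ᵥ x
  have hAt : Aᵀ = A := by
    have := hA.isHermitian
    exact isHermitian_iff_isSymm.mp this
  have hLy : L *ᵥ y = A *ᵥ x := by
    rw [hy, mulVec_mulVec, Matrix.mul_nonsing_inv _ (isUnit_iff_ne_zero.mpr hL.det_pos.ne'),
      one_mulVec]
  have hxAy : x ⬝ᵥ A *ᵥ y = c := by
    rw [hc, dotProduct_mulVec]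
    congr 1
    rw [← mulVec_transpose, hAt]
  have hyLy : y ⬝ᵥ L *ᵥ y = c := by
    rw [hLy, hc, dotProduct_comm]
  have ht : y ⬝ᵥ A *ᵥ y ≤ (1 / τ) * c := by
    have := h y; rwa [hyLy] at this
  have htc : τ * (y ⬝ᵥ A *ᵥ y) ≤ c := by
    have := mul_le_mul_of_nonneg_left ht hτ.le
    calc τ * (y ⬝ᵥ A *ᵥ y) ≤ τ * ((1 / τ) * c) := this
      _ = c := by field_simp
  have hcs := csA hA.posSemidef x y
  rw [hxAy] at hcs
  have hc0 : 0 ≤ c := by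
    have := (hL.inv.posSemidef).dotProduct_mulVec_nonneg (A *ᵥ x)
    simpa [hc, hy] using this
  have hs0 : 0 ≤ x ⬝ᵥ A *ᵥ x := by simpa using hA.posSemidef.dotProduct_mulVec_nonneg x
  have ht0 : 0 ≤ y ⬝ᵥ A *ᵥ y := by simpa using hA.posSemidef.dotProduct_mulVec_nonneg y
  rcases eq_or_lt_of_le hc0 with hc' | hc'
  · rw [← hc']; simpa using hs0
  · nlinarith [mul_le_mul_of_nonneg_left hcs hτ.le,
      mul_le_mul_of_nonneg_left htc hs0]
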